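/- (Eckart–Young–Mirsky for Bochner matrices, Frobenius-type norm) Let A ∈ H^{m×n} be a nonzero Bochner matrix with singular values σ₁ ≥ σ₂ ≥ ⋯ ≥ σ_r > 0 (r = rank_c A), and let 1 ≤ κ ≤ r. Then min over Bochner matrices B ∈ H^{m×n} with rank_c(B) ≤ κ of ‖A − B‖_{ℓ²(H)} equals (σ_{κ+1}² + ⋯ + σ_r²)^{1/2}, and the minimum is attained by the κ-truncated SVD of A. -/

import Mathlib

open scoped BigOperators

noncomputable def bmul {𝕜 H : Type*} [RCLike 𝕜] [NormedAddCommGroup H]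
    [InnerProductSpace 𝕜 H] {m : ℕ} {ι : Type*} [Fintype ι]
    (A : Fin m → ι → H) : (ι → 𝕜) →ₗ[𝕜] (Fin m → H) where
  toFun x := fun i => ∑ j, x j • A i j
  map_add' x y := by
    funext i
    simp [add_smul, Finset.sum_add_distrib]
  map_smul' c x := by
    funext i
    simp [smul_smul, Finset.smul_sum]

/-- The column rank of a Bochner matrix: the dimension of the image of `x ↦ A·x`. -/
noncomputable def crank (𝕜 : Type*) {H : Type*} [RCLike 𝕜] [NormedAddCommGroup H]
    [InnerProductSpace 𝕜 H] {m : ℕ} {ι : Type*} [Fintype ι]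
    (A : Fin m → ι → H) : ℕ :=
  Module.finrank 𝕜 (LinearMap.range (bmul (𝕜 := 𝕜) A))

section EYMAux

open Finset

variable {𝕜 : Type*} [RCLike 𝕜]

lemma eym_sum_fin_lt_eq {M : Type*} [AddCommMonoid M] {r κ : ℕ} (h : κ ≤ r) (f : Fin r → M) :
    ∑ s : Fin r, (if (s : ℕ) < κ then f s else 0) = ∑ t : Fin κ, f (Fin.castLE h t) := by
  classical
  rw [← Finset.sum_filter]
  have hmap : ∑ t : Fin κ, f (Fin.castLE h t)
      = ∑ s ∈ Finset.univ.map (Fin.castLEEmb h), f s := by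
    rw [Finset.sum_map]; rfl
  rw [hmap]
  congr 1
  ext s
  simp only [Finset.mem_filter, Finset.mem_univ, true_and, Finset.mem_map,
    Fin.castLEEmb_apply]
  constructor
  · intro hs; exact ⟨⟨(s : ℕ), hs⟩, rfl⟩
  · rintro ⟨t, rfl⟩; exact t.2

lemma eym_coeff_orth {n r : ℕ} (σ : Fin r → ℝ) (V : Matrix (Fin n) (Fin r) 𝕜)
    (hV : V.conjTranspose * V = 1) (s t : Fin r) :
    ∑ j : Fin n, (starRingEnd 𝕜) ((σ s : 𝕜) * (starRingEnd 𝕜) (V j s)) *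
      ((σ t : 𝕜) * (starRingEnd 𝕜) (V j t)) =
    if s = t then ((σ s ^ 2 : ℝ) : 𝕜) else 0 := by
  have h1 : ∑ j, (starRingEnd 𝕜) (V j t) * V j s = if t = s then 1 else 0 := by
    have := congrFun (congrFun (congrArg Matrix.of.symm hV) t) s
    simpa [Matrix.mul_apply, Matrix.conjTranspose_apply, Matrix.one_apply] using
      congrFun (congrFun hV t) s
  have h2 : ∑ j : Fin n, (starRingEnd 𝕜) ((σ s : 𝕜) * (starRingEnd 𝕜) (V j s)) *
      ((σ t : 𝕜) * (starRingEnd 𝕜) (V j t))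
      = ((σ s : 𝕜) * (σ t : 𝕜)) * ∑ j, (starRingEnd 𝕜) (V j t) * V j s := by
    rw [Finset.mul_sum]
    refine Finset.sum_congr rfl fun j _ => ?_
    simp only [map_mul, RingHomCompTriple.comp_apply, RCLike.conj_ofReal,
      RingHom.id_apply, starRingEnd_self_apply]
    ring
  rw [h2, h1]
  by_cases hst : s = t
  · subst hst
    simp [pow_two, RCLike.ofReal_mul]
  · rw [if_neg (fun h => hst h.symm), if_neg hst, mul_zero]

lemma eym_norm_sq_expand {E : Type*} [NormedAddCommGroup E] [InnerProductSpace 𝕜 E]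
    {n r : ℕ} (σ : Fin r → ℝ) (V : Matrix (Fin n) (Fin r) 𝕜)
    (hV : V.conjTranspose * V = 1) (f : Fin r → E) (T : Finset (Fin r)) :
    ∑ j : Fin n, ‖∑ s ∈ T, ((σ s : 𝕜) * (starRingEnd 𝕜) (V j s)) • f s‖ ^ 2
      = ∑ s ∈ T, σ s ^ 2 * ‖f s‖ ^ 2 := by
  classical
  set c : Fin n → Fin r → 𝕜 := fun j s => (σ s : 𝕜) * (starRingEnd 𝕜) (V j s) with hc
  have key : ∀ j, (inner 𝕜 (∑ s ∈ T, c j s • f s) (∑ t ∈ T, c j t • f t) : 𝕜)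
      = ∑ s ∈ T, ∑ t ∈ T, ((starRingEnd 𝕜) (c j s) * c j t) * inner 𝕜 (f s) (f t) := by
    intro j
    rw [sum_inner]
    refine Finset.sum_congr rfl fun s _ => ?_
    rw [inner_smul_left, inner_sum, Finset.mul_sum]
    refine Finset.sum_congr rfl fun t _ => ?_
    rw [inner_smul_right]; ring
  have key2 : (∑ j : Fin n, (inner 𝕜 (∑ s ∈ T, c j s • f s) (∑ t ∈ T, c j t • f t) : 𝕜))
      = ∑ s ∈ T, ((σ s ^ 2 : ℝ) : 𝕜) * inner 𝕜 (f s) (f s) := by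
    simp_rw [key]
    rw [Finset.sum_comm]
    refine Finset.sum_congr rfl fun s hsT => ?_
    rw [Finset.sum_comm]
    have : ∀ t ∈ T, ∑ j : Fin n, ((starRingEnd 𝕜) (c j s) * c j t) * inner 𝕜 (f s) (f t)
        = (if s = t then ((σ s ^ 2 : ℝ) : 𝕜) else 0) * inner 𝕜 (f s) (f t) := by
      intro t _
      rw [← Finset.sum_mul, eym_coeff_orth σ V hV s t]
    rw [Finset.sum_congr rfl this]
    simp_rw [ite_mul, zero_mul]
    rw [Finset.sum_ite_eq, if_pos hsT]
  calc ∑ j : Fin n, ‖∑ s ∈ T, c j s • f s‖ ^ 2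
      = RCLike.re (K := 𝕜) (∑ j : Fin n,
          (inner 𝕜 (∑ s ∈ T, c j s • f s) (∑ t ∈ T, c j t • f t) : 𝕜)) := by
        rw [map_sum]
        exact (Finset.sum_congr rfl fun j _ => (inner_self_eq_norm_sq _).symm)
    _ = RCLike.re (K := 𝕜) (∑ s ∈ T, ((σ s ^ 2 : ℝ) : 𝕜) * inner 𝕜 (f s) (f s)) := by rw [key2]
    _ = ∑ s ∈ T, σ s ^ 2 * ‖f s‖ ^ 2 := by
        rw [map_sum]
        exact Finset.sum_congr rfl fun s _ => by
          rw [RCLike.re_ofReal_mul, inner_self_eq_norm_sq]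

lemma eym_norm_sq_sum_smul_orthonormal {E ι : Type*} [NormedAddCommGroup E]
    [InnerProductSpace 𝕜 E] [Fintype ι] [DecidableEq ι] {v : ι → E}
    (hv : Orthonormal 𝕜 v) (c : ι → 𝕜) :
    ‖∑ k, c k • v k‖ ^ 2 = ∑ k, ‖c k‖ ^ 2 := by
  rw [← inner_self_eq_norm_sq (𝕜 := 𝕜) (∑ k, c k • v k), sum_inner]
  have hterm : ∀ k : ι, (inner 𝕜 (c k • v k) (∑ l, c l • v l) : 𝕜)
      = (starRingEnd 𝕜) (c k) * c k := by
    intro k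
    rw [inner_smul_left, inner_sum]
    simp_rw [inner_smul_right]
    rw [Finset.sum_eq_single k]
    · rw [orthonormal_iff_ite.mp hv k k]; simp
    · intro l _ hlk
      rw [orthonormal_iff_ite.mp hv k l, if_neg (fun h => hlk h.symm), mul_zero]
    · simp
  rw [Finset.sum_congr rfl (fun k _ => hterm k), map_sum]
  refine Finset.sum_congr rfl fun k _ => ?_
  rw [RCLike.conj_mul]
  norm_cast

lemma eym_majorize {r κ : ℕ} (hκr : κ ≤ r) (σ : Fin r → ℝ)
    (hσmono : ∀ s t : Fin r, s ≤ t → σ t ≤ σ s) (hσnn : ∀ s, 0 ≤ σ s)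
    (τ : Fin r → ℝ) (hτ0 : ∀ s, 0 ≤ τ s) (hτ1 : ∀ s, τ s ≤ 1)
    (hsum : ∑ s, τ s ≤ (κ : ℝ)) :
    ∑ s : Fin r, (if κ ≤ (s : ℕ) then σ s ^ 2 else 0)
      ≤ ∑ s : Fin r, σ s ^ 2 * (1 - τ s) := by
  rcases eq_or_lt_of_le hκr with h | h
  · have hno : ∀ s : Fin r, ¬ (κ ≤ (s : ℕ)) := fun s => not_le.mpr (h ▸ s.2)
    rw [Finset.sum_congr rfl (fun s _ => if_neg (hno s)), Finset.sum_const, smul_zero]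
    exact Finset.sum_nonneg fun s _ =>
      mul_nonneg (sq_nonneg _) (by linarith [hτ1 s])
  · set k0 : Fin r := ⟨κ, h⟩ with hk0
    have key : ∀ s : Fin r, (if κ ≤ (s : ℕ) then σ s ^ 2 else 0)
        + σ k0 ^ 2 * ((if (s : ℕ) < κ then (1:ℝ) else 0) - τ s) ≤ σ s ^ 2 * (1 - τ s) := by
      intro s
      by_cases hs : (s : ℕ) < κ
      · have h1 : σ k0 ≤ σ s := hσmono s k0 (by simp [Fin.le_def, hk0]; omega)
        have h2 : σ k0 ^ 2 ≤ σ s ^ 2 := pow_le_pow_left₀ (hσnn k0) h1 2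
        have h3 : (0:ℝ) ≤ 1 - τ s := by linarith [hτ1 s]
        rw [if_neg (not_le.mpr hs), if_pos hs]
        nlinarith
      · have h1 : σ s ≤ σ k0 := hσmono k0 s (by simp [Fin.le_def, hk0]; omega)
        have h2 : σ s ^ 2 ≤ σ k0 ^ 2 := pow_le_pow_left₀ (hσnn s) h1 2
        rw [if_pos (not_lt.mp hs), if_neg hs]
        nlinarith [hτ0 s]
    have hsum2 := Finset.sum_le_sum (fun s (_ : s ∈ Finset.univ) => key s)
    have hcard : ∑ s : Fin r, (if (s : ℕ) < κ then (1:ℝ) else 0) = κ := by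
      rw [eym_sum_fin_lt_eq hκr (fun _ => (1:ℝ))]; simp
    have expand : ∑ s : Fin r, ((if κ ≤ (s : ℕ) then σ s ^ 2 else 0)
          + σ k0 ^ 2 * ((if (s : ℕ) < κ then (1:ℝ) else 0) - τ s))
        = (∑ s : Fin r, if κ ≤ (s : ℕ) then σ s ^ 2 else 0)
          + σ k0 ^ 2 * ((κ : ℝ) - ∑ s, τ s) := by
      rw [Finset.sum_add_distrib, ← Finset.mul_sum, Finset.sum_sub_distrib, hcard]
    rw [expand] at hsum2
    nlinarith [sq_nonneg (σ k0)]

end EYMAux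

open Finset in
set_option maxHeartbeats 2000000 in
/-- Eckart–Young–Mirsky for Bochner matrices (Frobenius-type norm): given an SVD
`A = U Σ V*` of a nonzero `A` with column rank `r` and `1 ≤ κ ≤ r`, the
`κ`-truncated SVD `B₀` has `rank_c B₀ ≤ κ`, its error is
`(σ_{κ+1}² + ⋯ + σ_r²)^{1/2}`, and it minimizes `‖A − B‖_{ℓ²(H)}` over all
Bochner matrices `B` of column rank at most `κ`. -/
theorem bochner_eckart_young_mirsky {𝕜 H : Type*} [RCLike 𝕜]
    [NormedAddCommGroup H] [InnerProductSpace 𝕜 H] [CompleteSpace H]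
    {m n r κ : ℕ} (A : Fin m → Fin n → H)
    (hA : A ≠ fun _ _ => 0) (hr : crank 𝕜 A = r) (hκ1 : 1 ≤ κ) (hκr : κ ≤ r)
    (σ : Fin r → ℝ) (hσmono : ∀ s t : Fin r, s ≤ t → σ t ≤ σ s)
    (hσpos : ∀ s, 0 < σ s)
    (U : Fin m → Fin r → H) (V : Matrix (Fin n) (Fin r) 𝕜)
    (hU : ∀ s t : Fin r, (∑ i, inner (𝕜 := 𝕜) (U i t) (U i s)) =
      if s = t then 1 else 0)
    (hV : V.conjTranspose * V = 1)
    (hSVD : ∀ i j, A i j = ∑ s, ((σ s : 𝕜) * (starRingEnd 𝕜) (V j s)) • U i s)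
    (B₀ : Fin m → Fin n → H)
    (hB₀ : ∀ i j, B₀ i j = ∑ s : Fin r,
      if (s : ℕ) < κ then ((σ s : 𝕜) * (starRingEnd 𝕜) (V j s)) • U i s else 0) :
    crank 𝕜 B₀ ≤ κ ∧
    Real.sqrt (∑ i, ∑ j, ‖A i j - B₀ i j‖ ^ 2) =
      Real.sqrt (∑ s : Fin r, if κ ≤ (s : ℕ) then σ s ^ 2 else 0) ∧
    ∀ B : Fin m → Fin n → H, crank 𝕜 B ≤ κ →
      Real.sqrt (∑ s : Fin r, if κ ≤ (s : ℕ) then σ s ^ 2 else 0) ≤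
        Real.sqrt (∑ i, ∑ j, ‖A i j - B i j‖ ^ 2) := by
  classical
  refine ⟨?_, ?_, ?_⟩
  · -- Part 1: crank bound
    classical
    set c : Fin n → Fin r → 𝕜 := fun j s => (σ s : 𝕜) * (starRingEnd 𝕜) (V j s) with hc
    set g : Fin κ → (Fin m → H) := fun t => (fun i => U i (Fin.castLE hκr t)) with hg
    have hx : ∀ x : Fin n → 𝕜, bmul (𝕜 := 𝕜) B₀ x
        = ∑ t : Fin κ, (∑ j, x j * c j (Fin.castLE hκr t)) • g t := by
      intro x
      funext i
      have h1 : bmul (𝕜 := 𝕜) B₀ x i = ∑ j, x j • B₀ i j := rfl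
      rw [h1]
      have h2 : ∀ j, x j • B₀ i j
          = ∑ s : Fin r, (if (s : ℕ) < κ then (x j * c j s) • U i s else 0) := by
        intro j
        rw [hB₀ i j, Finset.smul_sum]
        refine Finset.sum_congr rfl fun s _ => ?_
        by_cases hs : (s : ℕ) < κ
        · rw [if_pos hs, if_pos hs, smul_smul]
        · rw [if_neg hs, if_neg hs, smul_zero]
      rw [Finset.sum_congr rfl fun j _ => h2 j, Finset.sum_comm]
      have h3 : ∀ s : Fin r, ∑ j, (if (s : ℕ) < κ then (x j * c j s) • U i s else 0)
          = (if (s : ℕ) < κ then (∑ j, x j * c j s) • U i s else 0) := by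
        intro s; split_ifs with hs
        · rw [Finset.sum_smul]
        · exact Finset.sum_const_zero
      rw [Finset.sum_congr rfl fun s _ => h3 s,
        eym_sum_fin_lt_eq hκr (fun s => (∑ j, x j * c j s) • U i s)]
      rw [Finset.sum_apply]
      rfl
    have hle : LinearMap.range (bmul (𝕜 := 𝕜) B₀) ≤ Submodule.span 𝕜 (Set.range g) := by
      rintro y ⟨x, rfl⟩
      rw [hx x]
      exact Submodule.sum_mem _ fun t _ =>
        Submodule.smul_mem _ _ (Submodule.subset_span ⟨t, rfl⟩)
    haveI : Module.Finite 𝕜 (Submodule.span 𝕜 (Set.range g)) :=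
      FiniteDimensional.span_of_finite 𝕜 (Set.finite_range g)
    calc crank 𝕜 B₀ = Module.finrank 𝕜 (LinearMap.range (bmul (𝕜 := 𝕜) B₀)) := rfl
      _ ≤ Module.finrank 𝕜 (Submodule.span 𝕜 (Set.range g)) := Submodule.finrank_mono hle
      _ ≤ κ := by simpa [Set.finrank] using finrank_range_le_card (R := 𝕜) g
  · -- Part 2: error formula
    classical
    set c : Fin n → Fin r → 𝕜 := fun j s => (σ s : 𝕜) * (starRingEnd 𝕜) (V j s) with hc
    set uE : Fin r → PiLp 2 (fun _ : Fin m => H) :=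
      fun s => (WithLp.equiv 2 (∀ _ : Fin m, H)).symm (fun i => U i s) with huE
    have hu_inner : ∀ s t : Fin r, (inner 𝕜 (uE t) (uE s) : 𝕜) = if s = t then 1 else 0 := by
      intro s t
      rw [← hU s t, PiLp.inner_apply]
      exact Finset.sum_congr rfl fun i _ => rfl
    have hu_normsq : ∀ s, ‖uE s‖ ^ 2 = 1 := by
      intro s
      rw [← inner_self_eq_norm_sq (𝕜 := 𝕜), hu_inner s s, if_pos rfl]
      simp
    have hnormcol : ∀ D : Fin m → Fin n → H, (∑ i, ∑ j, ‖D i j‖ ^ 2)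
        = ∑ j, ‖(WithLp.equiv 2 (∀ _ : Fin m, H)).symm (fun i => D i j)‖ ^ 2 := by
      intro D
      rw [Finset.sum_comm]
      refine Finset.sum_congr rfl fun j _ => ?_
      rw [PiLp.norm_sq_eq_of_L2]
      exact Finset.sum_congr rfl fun i _ => rfl
    have hsum_apply : ∀ (g : Fin r → PiLp 2 (fun _ : Fin m => H)) (T : Finset (Fin r)) (i : Fin m),
        (∑ s ∈ T, g s) i = ∑ s ∈ T, g s i := fun g T i => by rw [WithLp.ofLp_sum, Finset.sum_apply]
    set Tgeq : Finset (Fin r) := Finset.univ.filter (fun s => κ ≤ (s : ℕ)) with hT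
    have hcolD : ∀ j, (WithLp.equiv 2 (∀ _ : Fin m, H)).symm (fun i => A i j - B₀ i j)
        = ∑ s ∈ Tgeq, c j s • uE s := by
      intro j
      ext i
      rw [hsum_apply]
      show A i j - B₀ i j = ∑ s ∈ Tgeq, (c j s • uE s) i
      have : ∀ s, (c j s • uE s) i = c j s • U i s := fun s => rfl
      rw [Finset.sum_congr rfl fun s _ => this s, hT, Finset.sum_filter,
        hSVD i j, hB₀ i j, ← Finset.sum_sub_distrib]
      refine Finset.sum_congr rfl fun s _ => ?_
      by_cases hs : (s : ℕ) < κ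
      · rw [if_pos hs, if_neg (not_le.mpr hs), sub_self]
      · rw [if_neg hs, if_pos (not_lt.mp hs), sub_zero]
    rw [hnormcol (fun i j => A i j - B₀ i j)]
    congr 1
    simp only [hcolD]
    rw [eym_norm_sq_expand σ V hV uE Tgeq,
      Finset.sum_congr rfl fun s _ => by rw [hu_normsq s, mul_one], hT, Finset.sum_filter]
  · -- Part 3: minimality
    intro B hB
    classical
    set c : Fin n → Fin r → 𝕜 := fun j s => (σ s : 𝕜) * (starRingEnd 𝕜) (V j s) with hc
    set uE : Fin r → PiLp 2 (fun _ : Fin m => H) :=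
      fun s => (WithLp.equiv 2 (∀ _ : Fin m, H)).symm (fun i => U i s) with huE
    have hu_inner : ∀ s t : Fin r, (inner 𝕜 (uE t) (uE s) : 𝕜) = if s = t then 1 else 0 := by
      intro s t
      rw [← hU s t, PiLp.inner_apply]
      exact Finset.sum_congr rfl fun i _ => rfl
    have hu_orth : Orthonormal 𝕜 uE := by
      rw [orthonormal_iff_ite]
      intro s t
      rw [hu_inner t s]
      by_cases h : s = t
      · subst h; simp
      · rw [if_neg (fun hh => h hh.symm), if_neg h]
    have hu_normsq : ∀ s, ‖uE s‖ ^ 2 = 1 := by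
      intro s
      rw [← inner_self_eq_norm_sq (𝕜 := 𝕜), hu_inner s s, if_pos rfl]
      simp
    have hnormcol : ∀ D : Fin m → Fin n → H, (∑ i, ∑ j, ‖D i j‖ ^ 2)
        = ∑ j, ‖(WithLp.equiv 2 (∀ _ : Fin m, H)).symm (fun i => D i j)‖ ^ 2 := by
      intro D
      rw [Finset.sum_comm]
      refine Finset.sum_congr rfl fun j _ => ?_
      rw [PiLp.norm_sq_eq_of_L2]
      exact Finset.sum_congr rfl fun i _ => rfl
    have hsum_apply : ∀ (g : Fin r → PiLp 2 (fun _ : Fin m => H)) (T : Finset (Fin r)) (i : Fin m),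
        (∑ s ∈ T, g s) i = ∑ s ∈ T, g s i := fun g T i => by rw [WithLp.ofLp_sum, Finset.sum_apply]
    set aE : Fin n → PiLp 2 (fun _ : Fin m => H) :=
      fun j => (WithLp.equiv 2 (∀ _ : Fin m, H)).symm (fun i => A i j) with haE
    set bE : Fin n → PiLp 2 (fun _ : Fin m => H) :=
      fun j => (WithLp.equiv 2 (∀ _ : Fin m, H)).symm (fun i => B i j) with hbE
    have hcolA : ∀ j, aE j = ∑ s : Fin r, c j s • uE s := by
      intro j
      ext i
      rw [hsum_apply]
      show A i j = ∑ s : Fin r, (c j s • uE s) i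
      rw [hSVD i j]
      rfl
    -- the subspace W
    set F := LinearMap.range (bmul (𝕜 := 𝕜) B) with hF
    haveI : Module.Finite 𝕜 F := inferInstance
    set e := WithLp.linearEquiv 2 𝕜 (∀ _ : Fin m, H) with he
    set W : Submodule 𝕜 (PiLp 2 fun _ : Fin m => H) := F.map e.symm.toLinearMap with hW
    haveI : FiniteDimensional 𝕜 W := Module.Finite.map F e.symm.toLinearMap
    haveI : CompleteSpace W := FiniteDimensional.complete 𝕜 W
    have hWrank : Module.finrank 𝕜 W ≤ κ := by
      rw [hW, LinearEquiv.finrank_map_eq e.symm F]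
      exact hB
    have hbW : ∀ j, bE j ∈ W := by
      intro j
      have hsingle : bmul (𝕜 := 𝕜) B (Pi.single j (1 : 𝕜)) = fun i => B i j := by
        funext i
        have h5 : bmul (𝕜 := 𝕜) B (Pi.single j (1 : 𝕜)) i
            = ∑ j', (Pi.single j (1 : 𝕜) : Fin n → 𝕜) j' • B i j' := rfl
        rw [h5, Finset.sum_eq_single j]
        · simp
        · intro j' _ hj'; simp [Pi.single_apply, hj']
        · simp
      exact ⟨fun i => B i j, ⟨Pi.single j (1 : 𝕜), hsingle⟩, rfl⟩
    -- Pythagoras facts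
    have hpyth : ∀ y : PiLp 2 (fun _ : Fin m => H),
        ‖y‖ ^ 2 = ‖(W.orthogonalProjectionOnto y : PiLp 2 (fun _ : Fin m => H))‖ ^ 2
          + ‖y - W.orthogonalProjectionOnto y‖ ^ 2 := by
      intro y
      have h0 : (inner 𝕜 ((W.orthogonalProjectionOnto y : PiLp 2 (fun _ : Fin m => H)))
          (y - W.orthogonalProjectionOnto y) : 𝕜) = 0 :=
        Submodule.inner_right_of_mem_orthogonal (Submodule.coe_mem _)
          (Submodule.sub_starProjection_mem_orthogonal (K := W) y)
      have hnn := norm_add_sq_eq_norm_sq_add_norm_sq_of_inner_eq_zero _ _ h0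
      have harr : (W.orthogonalProjectionOnto y : PiLp 2 (fun _ : Fin m => H))
          + (y - W.orthogonalProjectionOnto y) = y := by abel
      rw [harr] at hnn
      rw [pow_two, pow_two, pow_two]
      exact hnn
    have hmin : ∀ (y w : PiLp 2 (fun _ : Fin m => H)), w ∈ W →
        ‖y - W.orthogonalProjectionOnto y‖ ^ 2 ≤ ‖y - w‖ ^ 2 := by
      intro y w hw
      have h0 : (inner 𝕜 (y - (W.orthogonalProjectionOnto y : PiLp 2 (fun _ : Fin m => H)))
          ((W.orthogonalProjectionOnto y : PiLp 2 (fun _ : Fin m => H)) - w) : 𝕜) = 0 :=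
        Submodule.inner_left_of_mem_orthogonal
          (Submodule.sub_mem W (Submodule.coe_mem _) hw)
          (Submodule.sub_starProjection_mem_orthogonal (K := W) y)
      have hnn := norm_add_sq_eq_norm_sq_add_norm_sq_of_inner_eq_zero _ _ h0
      have harr : (y - (W.orthogonalProjectionOnto y : PiLp 2 (fun _ : Fin m => H)))
          + ((W.orthogonalProjectionOnto y : PiLp 2 (fun _ : Fin m => H)) - w) = y - w := by abel
      rw [harr] at hnn
      have hsq : ‖y - w‖ ^ 2 = ‖y - W.orthogonalProjectionOnto y‖ ^ 2
          + ‖(W.orthogonalProjectionOnto y : PiLp 2 (fun _ : Fin m => H)) - w‖ ^ 2 := by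
        rw [pow_two, pow_two, pow_two]
        exact hnn
      rw [hsq]
      nlinarith [sq_nonneg (‖(W.orthogonalProjectionOnto y : PiLp 2 (fun _ : Fin m => H)) - w‖)]
    -- τ
    set τ : Fin r → ℝ :=
      fun s => ‖(W.orthogonalProjectionOnto (uE s) : PiLp 2 (fun _ : Fin m => H))‖ ^ 2 with hτ
    have hτ0 : ∀ s, 0 ≤ τ s := fun s => sq_nonneg _
    have hτ1 : ∀ s, τ s ≤ 1 := by
      intro s
      have h1 := hpyth (uE s)
      rw [hu_normsq s] at h1
      have h2 : τ s = ‖(W.orthogonalProjectionOnto (uE s) : PiLp 2 (fun _ : Fin m => H))‖ ^ 2 := rfl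
      rw [h2]
      nlinarith [sq_nonneg (‖uE s - (W.orthogonalProjectionOnto (uE s) : PiLp 2 (fun _ : Fin m => H))‖)]
    -- Bessel/trace bound
    set d := Module.finrank 𝕜 W with hd
    set w : OrthonormalBasis (Fin d) 𝕜 W := stdOrthonormalBasis 𝕜 W with hw
    have hwE : Orthonormal 𝕜 (fun k => ((w k : W) : PiLp 2 (fun _ : Fin m => H))) := by
      rw [orthonormal_iff_ite]
      intro k l
      rw [← Submodule.coe_inner, orthonormal_iff_ite.mp w.orthonormal k l]
    have hproj_eq : ∀ y : PiLp 2 (fun _ : Fin m => H),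
        (W.orthogonalProjectionOnto y : PiLp 2 (fun _ : Fin m => H))
        = ∑ k, (inner 𝕜 ((w k : PiLp 2 (fun _ : Fin m => H))) y : 𝕜)
            • ((w k : W) : PiLp 2 (fun _ : Fin m => H)) := by
      intro y
      rw [w.orthogonalProjectionOnto_apply_eq_sum y]
      push_cast
      simp
    have hτ_eq : ∀ s, τ s
        = ∑ k, ‖(inner 𝕜 ((w k : PiLp 2 (fun _ : Fin m => H))) (uE s) : 𝕜)‖ ^ 2 := by
      intro s
      have h2 : τ s = ‖(W.orthogonalProjectionOnto (uE s) : PiLp 2 (fun _ : Fin m => H))‖ ^ 2 := rfl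
      rw [h2, hproj_eq (uE s), eym_norm_sq_sum_smul_orthonormal hwE]
    have hτsum : ∑ s, τ s ≤ (κ : ℝ) := by
      have h1 : ∑ s, τ s ≤ (d : ℝ) := by
        rw [Finset.sum_congr rfl fun s _ => hτ_eq s, Finset.sum_comm]
        calc ∑ k : Fin d, ∑ s : Fin r,
              ‖(inner 𝕜 ((w k : PiLp 2 (fun _ : Fin m => H))) (uE s) : 𝕜)‖ ^ 2
            ≤ ∑ k : Fin d, (1 : ℝ) := by
              refine Finset.sum_le_sum fun k _ => ?_
              have h2 : ∀ s : Fin r,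
                  ‖(inner 𝕜 ((w k : PiLp 2 (fun _ : Fin m => H))) (uE s) : 𝕜)‖ ^ 2
                  = ‖(inner 𝕜 (uE s) ((w k : PiLp 2 (fun _ : Fin m => H))) : 𝕜)‖ ^ 2 := by
                intro s
                rw [← inner_conj_symm, RCLike.norm_conj]
              rw [Finset.sum_congr rfl fun s _ => h2 s]
              have h3 := hu_orth.sum_inner_products_le
                (s := Finset.univ) ((w k : PiLp 2 (fun _ : Fin m => H)))
              have h4 : ‖((w k : W) : PiLp 2 (fun _ : Fin m => H))‖ = 1 := by
                rw [Submodule.norm_coe]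
                exact w.orthonormal.1 k
              rw [h4] at h3
              simpa using h3
          _ = (d : ℝ) := by simp
      calc ∑ s, τ s ≤ (d : ℝ) := h1
        _ ≤ (κ : ℝ) := by exact_mod_cast hWrank
    -- sum identities
    have hsumA : ∑ j, ‖aE j‖ ^ 2 = ∑ s : Fin r, σ s ^ 2 := by
      simp only [hcolA]
      rw [eym_norm_sq_expand σ V hV uE Finset.univ]
      exact Finset.sum_congr rfl fun s _ => by rw [hu_normsq s, mul_one]
    have hPcol : ∀ j, (W.orthogonalProjectionOnto (aE j) : PiLp 2 (fun _ : Fin m => H))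
        = ∑ s : Fin r, c j s
            • (W.orthogonalProjectionOnto (uE s) : PiLp 2 (fun _ : Fin m => H)) := by
      intro j
      rw [hcolA j, map_sum]
      push_cast
      simp_rw [map_smul]
      push_cast
      simp
    have hsumP : ∑ j, ‖(W.orthogonalProjectionOnto (aE j) : PiLp 2 (fun _ : Fin m => H))‖ ^ 2
        = ∑ s : Fin r, σ s ^ 2 * τ s := by
      simp only [hPcol]
      rw [eym_norm_sq_expand σ V hV _ Finset.univ]
    -- main chain
    have hmain : ∑ s : Fin r, (if κ ≤ (s : ℕ) then σ s ^ 2 else 0)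
        ≤ ∑ i, ∑ j, ‖A i j - B i j‖ ^ 2 := by
      have h1 := eym_majorize hκr σ hσmono (fun s => (hσpos s).le) τ hτ0 hτ1 hτsum
      have h2 : ∑ s : Fin r, σ s ^ 2 * (1 - τ s)
          = ∑ j, (‖aE j‖ ^ 2 - ‖(W.orthogonalProjectionOnto (aE j) :
              PiLp 2 (fun _ : Fin m => H))‖ ^ 2) := by
        have hx : ∀ s : Fin r, σ s ^ 2 * (1 - τ s) = σ s ^ 2 - σ s ^ 2 * τ s :=
          fun s => by ring
        rw [Finset.sum_congr rfl fun s _ => hx s, Finset.sum_sub_distrib, ← hsumA, ← hsumP,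
          ← Finset.sum_sub_distrib]
      have h3 : ∀ j, ‖aE j‖ ^ 2 - ‖(W.orthogonalProjectionOnto (aE j) :
          PiLp 2 (fun _ : Fin m => H))‖ ^ 2 ≤ ‖aE j - bE j‖ ^ 2 := by
        intro j
        have hp := hpyth (aE j)
        have hm := hmin (aE j) (bE j) (hbW j)
        linarith
      have h4 : ∑ i, ∑ j, ‖A i j - B i j‖ ^ 2 = ∑ j, ‖aE j - bE j‖ ^ 2 := by
        rw [hnormcol (fun i j => A i j - B i j)]
        exact Finset.sum_congr rfl fun j _ => rfl
      calc ∑ s : Fin r, (if κ ≤ (s : ℕ) then σ s ^ 2 else 0)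
          ≤ ∑ s : Fin r, σ s ^ 2 * (1 - τ s) := h1
        _ = _ := h2
        _ ≤ ∑ j, ‖aE j - bE j‖ ^ 2 := Finset.sum_le_sum fun j _ => h3 j
        _ = ∑ i, ∑ j, ‖A i j - B i j‖ ^ 2 := h4.symm
    exact Real.sqrt_le_sqrt hmain
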